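/- (Fourier coefficient decay for high-energy Bloch eigenfunctions.) Fix $d \geq 2$, a full-rank lattice $\Lambda$ with dual $\Lambda^\dagger$, a smooth periodic potential $V$, an integer $m \geq 1$ and $\varkappa \in (0,1)$. Let $Q = \sup\{|\xi| : \xi \in \Omega^\dagger\}$ where $\Omega^\dagger$ is the first Brillouin zone. Then there exists $M_m > 0$ (depending on $d$, $\Lambda$, $V$, $m$) such that: for every $k \in \Omega^\dagger$, every normalized eigenfunction $\psi$ of $H(k) = (D+k)^2 + V$ with eigenvalue $\zeta \geq \max\{36Q^2\varkappa^{-2}, (1+m\varkappa)^{2/(d-1)}\varkappa^{-2d/(d-1)}\}$, and every $n \in \Lambda^\dagger$ with $|n| \geq (1+m\varkappa)\sqrt{\zeta}$, the Fourier coefficient satisfies $|\psi_n| < M_m \varkappa^{-m} |n|^{-(3m+1)/2}$. -/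

import Mathlib

noncomputable def latticePt (d : ℕ) (e : (Fin d → ℝ) ≃ₗ[ℝ] EuclideanSpace ℝ (Fin d))
    (v : Fin d → ℤ) : EuclideanSpace ℝ (Fin d) :=
  e (fun i => (v i : ℝ))

namespace Stmt12Aux

lemma summable_int_aux : Summable fun z : ℤ => (((1:ℝ) + |(z:ℝ)|) ^ 2)⁻¹ := by
  have h : Summable fun n : ℕ => (((1:ℝ) + |(n:ℝ)|) ^ 2)⁻¹ := by
    have h2 : Summable fun n : ℕ => ((1:ℝ) / (n:ℝ) ^ 2) := Real.summable_one_div_nat_pow.2 one_lt_two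
    refine ((summable_nat_add_iff 1).2 h2).of_nonneg_of_le (fun n => by positivity) (fun n => ?_)
    rw [one_div]
    refine inv_anti₀ (by positivity) ?_
    have : |(n:ℝ)| = (n:ℝ) := abs_of_nonneg (by positivity)
    rw [this]
    push_cast
    nlinarith [sq_nonneg ((n:ℝ))]
  refine Summable.of_nat_of_neg h ?_
  refine h.congr fun n => ?_
  simp


lemma summable_pi_aux : ∀ n : ℕ, Summable fun q : Fin n → ℤ => ∏ i, (((1:ℝ) + |(q i : ℝ)|) ^ 2)⁻¹ := by
  intro n
  induction n with
  | zero => exact Summable.of_finite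
  | succ n ih =>
      have hprod := (summable_int_aux.mul_of_nonneg ih
        (fun z => by positivity) (fun q => Finset.prod_nonneg fun i _ => by positivity))
      rw [← (Fin.consEquiv (fun _ : Fin (n+1) => ℤ)).summable_iff]
      refine hprod.congr fun p => ?_
      simp only [Function.comp, Fin.consEquiv_apply]
      rw [Fin.prod_univ_succ]
      simp


section NormBound

variable {d : ℕ} (B : (Fin d → ℝ) ≃ₗ[ℝ] EuclideanSpace ℝ (Fin d))

lemma exists_normbound :
    ∃ C : ℝ, 1 ≤ C ∧ ∀ q : Fin d → ℤ, ‖(fun i => (q i : ℝ) : Fin d → ℝ)‖ ≤ C * ‖latticePt d B q‖ := by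
  let L : EuclideanSpace ℝ (Fin d) →L[ℝ] (Fin d → ℝ) :=
    LinearMap.toContinuousLinearMap (B.symm : EuclideanSpace ℝ (Fin d) →ₗ[ℝ] (Fin d → ℝ))
  refine ⟨‖L‖ + 1, by linarith [norm_nonneg L], fun q => ?_⟩
  have h1 : (fun i => (q i : ℝ) : Fin d → ℝ) = L (latticePt d B q) := by
    simp [latticePt, L]
  rw [h1]
  calc ‖L (latticePt d B q)‖ ≤ ‖L‖ * ‖latticePt d B q‖ := L.le_opNorm _
    _ ≤ (‖L‖ + 1) * ‖latticePt d B q‖ := by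
        have := norm_nonneg (latticePt d B q); nlinarith

lemma summable_lattice_inv :
    Summable fun q : Fin d → ℤ => (((1:ℝ) + ‖latticePt d B q‖) ^ (2 * d))⁻¹ := by
  obtain ⟨C, hC1, hC⟩ := exists_normbound B
  have hC0 : (0:ℝ) < C := lt_of_lt_of_le one_pos hC1
  refine ((summable_pi_aux d).mul_left (C ^ (2 * d))).of_nonneg_of_le
    (fun q => by positivity) (fun q => ?_)
  have hkey : (C⁻¹) ^ (2*d) * (∏ i, ((1:ℝ) + |(q i : ℝ)|) ^ 2) ≤
      ((1:ℝ) + ‖latticePt d B q‖) ^ (2*d) := by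
    have h1 : ∀ i, (1:ℝ) + |(q i : ℝ)| ≤ C * (1 + ‖latticePt d B q‖) := by
      intro i
      have h2 : |(q i : ℝ)| ≤ ‖(fun i => (q i : ℝ) : Fin d → ℝ)‖ := by
        have := norm_le_pi_norm (fun i => (q i : ℝ) : Fin d → ℝ) i
        simpa using this
      have h3 := hC q
      nlinarith [norm_nonneg (latticePt d B q)]
    calc (C⁻¹) ^ (2*d) * ∏ i, ((1:ℝ) + |(q i : ℝ)|) ^ 2
        ≤ (C⁻¹) ^ (2*d) * ∏ i, (C * (1 + ‖latticePt d B q‖)) ^ 2 := by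
          refine mul_le_mul_of_nonneg_left (Finset.prod_le_prod (fun i _ => by positivity)
            (fun i _ => by nlinarith [h1 i, abs_nonneg ((q i : ℝ))])) (by positivity)
      _ = ((1:ℝ) + ‖latticePt d B q‖) ^ (2 * d) := by
          rw [Finset.prod_const]
          rw [Finset.card_univ, Fintype.card_fin, ← pow_mul, mul_pow, inv_pow, mul_comm 2 d,
            inv_mul_cancel_left₀ (by positivity), mul_comm d 2]
  have h5 : ((1:ℝ) + ‖latticePt d B q‖) ^ (2*d) > 0 := by positivity
  have h6 := inv_anti₀ (by positivity) hkey
  refine h6.trans_eq ?_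
  rw [mul_inv, inv_pow, inv_inv, ← Finset.prod_inv_distrib]


end NormBound

variable {d : ℕ} {B : (Fin d → ℝ) ≃ₗ[ℝ] EuclideanSpace ℝ (Fin d)} {Vc : (Fin d → ℤ) → ℂ}
  {Q κ ζ : ℝ} {m j : ℕ} {k : EuclideanSpace ℝ (Fin d)} {ψ : (Fin d → ℤ) → ℂ}

lemma one_add_pow_le (x : ℝ) (hx : 0 ≤ x) (p : ℕ) : (1 + x) ^ p ≤ 2 ^ p * (1 + x ^ p) := by
  rcases le_total x 1 with h | h
  · calc (1+x)^p ≤ 2^p := by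
          refine pow_le_pow_left₀ (by linarith) (by linarith) p
      _ ≤ 2^p * (1 + x^p) := by nlinarith [pow_nonneg hx p, pow_pos (show (0:ℝ) < 2 by norm_num) p]
  · calc (1+x)^p ≤ (2*x)^p := by
          refine pow_le_pow_left₀ (by linarith) (by linarith) p
      _ = 2^p * x^p := by rw [mul_pow]
      _ ≤ 2^p * (1 + x^p) := by nlinarith [pow_pos (show (0:ℝ) < 2 by norm_num) p]

lemma summable_weighted {Vc : (Fin d → ℤ) → ℂ}
    (hVsm : ∀ s : ℕ, Summable fun l : Fin d → ℤ => ‖latticePt d B l‖ ^ (2 * s) * ‖Vc l‖ ^ 2)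
    (t : ℕ) : Summable fun q : Fin d → ℤ => ‖latticePt d B q‖ ^ t * ‖Vc q‖ := by
  have h0 : Summable fun q : Fin d → ℤ => ‖Vc q‖ ^ 2 := by simpa using hVsm 0
  have htd := hVsm (t + d)
  have hlat := summable_lattice_inv B
  have hsum : Summable fun q : Fin d → ℤ =>
      2 ^ (2*(t+d)) * (‖Vc q‖^2 + ‖latticePt d B q‖ ^ (2*(t+d)) * ‖Vc q‖^2)
        + (((1:ℝ) + ‖latticePt d B q‖) ^ (2 * d))⁻¹ :=
    (((h0.add htd).mul_left _).add hlat)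
  refine hsum.of_nonneg_of_le (fun q => by positivity) (fun q => ?_)
  set x := ‖latticePt d B q‖ with hxdef
  have hx : 0 ≤ x := norm_nonneg _
  set v := ‖Vc q‖ with hvdef
  have hv : 0 ≤ v := norm_nonneg _
  have step1 : x ^ t * v ≤ ((1+x)^(t+d) * v) * ((1+x)^d)⁻¹ := by
    have h2 : (0:ℝ) < (1+x)^d := by positivity
    have h1 : (1+x)^(t+d) * v * ((1+x)^d)⁻¹ = (1+x)^t * v := by
      rw [pow_add]; field_simp
    rw [h1]
    exact mul_le_mul_of_nonneg_right (pow_le_pow_left₀ hx (by linarith) t) hv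
  have step2 : ((1+x)^(t+d) * v) * ((1+x)^d)⁻¹ ≤
      ((1+x)^(t+d) * v)^2 + (((1+x)^d)⁻¹)^2 := by
    nlinarith [sq_nonneg ((1+x)^(t+d) * v - ((1+x)^d)⁻¹), sq_nonneg ((1+x)^(t+d) * v + ((1+x)^d)⁻¹)]
  have step3 : ((1+x)^(t+d) * v)^2 ≤ 2 ^ (2*(t+d)) * (v^2 + x ^ (2*(t+d)) * v^2) := by
    have h3 := one_add_pow_le x hx (2*(t+d))
    have h4 : ((1+x)^(t+d))^2 = (1+x)^(2*(t+d)) := by rw [← pow_mul, mul_comm]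
    have h5 : (x ^ (t+d))^2 = x ^ (2*(t+d)) := by rw [← pow_mul, mul_comm]
    rw [mul_pow, h4]
    calc (1+x)^(2*(t+d)) * v^2 ≤ (2 ^ (2*(t+d)) * (1 + x ^ (2*(t+d)))) * v^2 :=
          mul_le_mul_of_nonneg_right h3 (by positivity)
      _ = 2 ^ (2*(t+d)) * (v^2 + x ^ (2*(t+d)) * v^2) := by ring
  have step4 : (((1+x)^d)⁻¹)^2 = (((1:ℝ)+x) ^ (2*d))⁻¹ := by
    rw [← inv_pow, ← pow_mul, mul_comm, inv_pow]
  calc x ^ t * v ≤ ((1+x)^(t+d) * v) * ((1+x)^d)⁻¹ := step1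
    _ ≤ ((1+x)^(t+d) * v)^2 + (((1+x)^d)⁻¹)^2 := step2
    _ ≤ 2 ^ (2*(t+d)) * (v^2 + x ^ (2*(t+d)) * v^2) + (((1:ℝ)+x) ^ (2*d))⁻¹ := by
        rw [← step4]; exact add_le_add_left step3 _


lemma psi_le_one (hS : Summable (fun n : Fin d → ℤ => ‖ψ n‖ ^ 2))
    (hN : (∑' n, ‖ψ n‖ ^ 2) = 1) (l : Fin d → ℤ) : ‖ψ l‖ ≤ 1 := by
  have h1 : ‖ψ l‖ ^ 2 ≤ 1 := hN ▸ hS.le_tsum l (fun j _ => sq_nonneg _)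
  exact (pow_le_one_iff_of_nonneg (norm_nonneg _) two_ne_zero).mp h1

lemma sqrtζ_facts (hd : 2 ≤ d) (hκ : κ ∈ Set.Ioo (0:ℝ) 1) (hQ : 0 < Q) (hm : 1 ≤ m)
    (hζ : max (36 * Q ^ 2 * κ⁻¹ ^ 2)
      ((1 + (m : ℝ) * κ) ^ ((2:ℝ)/((d:ℝ)-1)) * κ ^ (-(2:ℝ)*(d:ℝ)/((d:ℝ)-1))) ≤ ζ) :
    0 < ζ ∧ κ ^ (-(d:ℝ)/((d:ℝ)-1)) ≤ Real.sqrt ζ ∧ 1 < κ ^ (-(d:ℝ)/((d:ℝ)-1)) ∧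
      6 * Q ≤ κ * Real.sqrt ζ := by
  obtain ⟨hκ0, hκ1⟩ := hκ
  have hd1 : (0:ℝ) < (d:ℝ) - 1 := by
    have : (2:ℝ) ≤ (d:ℝ) := by exact_mod_cast hd
    linarith
  have hζQ : 36 * Q ^ 2 * κ⁻¹ ^ 2 ≤ ζ := le_trans (le_max_left _ _) hζ
  have hζκ : (1 + (m : ℝ) * κ) ^ ((2:ℝ)/((d:ℝ)-1)) * κ ^ (-(2:ℝ)*(d:ℝ)/((d:ℝ)-1)) ≤ ζ :=
    le_trans (le_max_right _ _) hζ
  have hζ0 : 0 < ζ := lt_of_lt_of_le (by positivity) hζQ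
  have h1m : (1:ℝ) ≤ 1 + (m:ℝ) * κ := by
    have : (0:ℝ) ≤ (m:ℝ) * κ := by positivity
    linarith
  have hone : (1:ℝ) ≤ (1 + (m : ℝ) * κ) ^ ((2:ℝ)/((d:ℝ)-1)) :=
    Real.one_le_rpow h1m (by positivity)
  have hκpos : (0:ℝ) < κ ^ (-(2:ℝ)*(d:ℝ)/((d:ℝ)-1)) := Real.rpow_pos_of_pos hκ0 _
  have hζκ2 : κ ^ (-(2:ℝ)*(d:ℝ)/((d:ℝ)-1)) ≤ ζ := by nlinarith
  have hhalf : (κ ^ (-(2:ℝ)*(d:ℝ)/((d:ℝ)-1))) ^ ((1:ℝ)/2) = κ ^ (-(d:ℝ)/((d:ℝ)-1)) := by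
    rw [← Real.rpow_mul (le_of_lt hκ0)]
    congr 1
    field_simp
  have hsq : κ ^ (-(d:ℝ)/((d:ℝ)-1)) ≤ Real.sqrt ζ := by
    rw [Real.sqrt_eq_rpow]
    rw [← hhalf]
    exact Real.rpow_le_rpow (le_of_lt hκpos) hζκ2 (by norm_num)
  have hgt1 : 1 < κ ^ (-(d:ℝ)/((d:ℝ)-1)) := by
    rw [Real.one_lt_rpow_iff_of_pos hκ0]
    right
    constructor
    · exact hκ1
    · have hd0 : (0:ℝ) < (d:ℝ) := by positivity
      exact div_neg_of_neg_of_pos (by linarith) hd1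
  have hQs : 6 * Q ≤ κ * Real.sqrt ζ := by
    have h6 : (0:ℝ) ≤ 6 * Q / κ := by positivity
    have h7 : (6 * Q / κ) ^ 2 ≤ ζ := by
      rw [div_pow]
      rw [div_le_iff₀ (by positivity)]
      calc (6*Q)^2 = 36 * Q^2 := by ring
        _ = (36 * Q^2 * κ⁻¹^2) * κ^2 := by field_simp
        _ ≤ ζ * κ ^ 2 := by nlinarith [sq_nonneg κ]
    have := (Real.le_sqrt h6 (le_of_lt hζ0)).mpr h7
    rw [div_le_iff₀ (by positivity)] at this
    linarith [this]
  exact ⟨hζ0, hsq, hgt1, hQs⟩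


set_option maxHeartbeats 1000000 in
/-- denominator bound: `ζ + κρ²/3 ≤ ‖pt n + k‖²`. -/
lemma den_bound (hκ : κ ∈ Set.Ioo (0:ℝ) 1) (hk : ‖k‖ ≤ Q)
    (hζ0 : 0 < ζ) (hQs : 6 * Q ≤ κ * Real.sqrt ζ) (hj1 : 1 ≤ j)
    {n : Fin d → ℤ} (hn : (1 + (j:ℝ) * κ) * Real.sqrt ζ ≤ ‖latticePt d B n‖) :
    ζ + κ * ‖latticePt d B n‖ ^ 2 / 3 ≤ ‖latticePt d B n + k‖ ^ 2 := by
  obtain ⟨hκ0, hκ1⟩ := hκ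
  set ρ := ‖latticePt d B n‖ with hρdef
  set r := Real.sqrt ζ with hrdef
  have hr0 : 0 < r := Real.sqrt_pos.mpr hζ0
  have hrr : r * r = ζ := Real.mul_self_sqrt (le_of_lt hζ0)
  have hj1' : (1:ℝ) ≤ (j:ℝ) := by exact_mod_cast hj1
  have hρr : (1 + κ) * r ≤ ρ := by
    nlinarith [mul_nonneg (mul_nonneg (sub_nonneg.mpr hj1') (le_of_lt hκ0)) (le_of_lt hr0)]
  have hρ0 : 0 < ρ := lt_of_lt_of_le (by positivity) hρr
  have hkr : ‖k‖ ≤ κ * r / 6 := by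
    have hQ0 : 0 ≤ Q := le_trans (norm_nonneg k) hk
    linarith
  have hlow : ρ - κ * r / 6 ≤ ‖latticePt d B n + k‖ := by
    have h1 : ρ ≤ ‖latticePt d B n + k‖ + ‖k‖ := by
      calc ρ = ‖(latticePt d B n + k) - k‖ := by rw [add_sub_cancel_right]
        _ ≤ ‖latticePt d B n + k‖ + ‖k‖ := norm_sub_le _ _
    linarith
  have hlow0 : 0 ≤ ρ - κ * r / 6 := by nlinarith
  have hsq : (ρ - κ * r / 6) ^ 2 ≤ ‖latticePt d B n + k‖ ^ 2 := by
    exact pow_le_pow_left₀ hlow0 hlow 2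
  rcases le_total (2 * r) ρ with hcase | hcase
  · -- ρ ≥ 2r : ζ ≤ ρ²/4
    have hζρ : ζ ≤ ρ^2 / 4 := by nlinarith
    have hrρ : κ * r / 6 ≤ κ * ρ / 12 := by nlinarith
    have e1 : ρ - κ*ρ/12 ≤ ρ - κ*r/6 := by linarith
    have e10 : 0 ≤ ρ - κ*ρ/12 := by nlinarith
    have e2 : (ρ - κ*ρ/12)^2 ≤ (ρ - κ*r/6)^2 := pow_le_pow_left₀ e10 e1 2
    have e3 : ζ + κ * ρ^2/3 ≤ (ρ - κ*ρ/12)^2 := by nlinarith [sq_nonneg (κ*ρ), sq_nonneg ρ]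
    linarith
  · -- ρ ≤ 2r
    have h2 : (1 + 5*κ/6) * r ≤ ρ - κ * r / 6 := by nlinarith
    have h3 : ((1 + 5*κ/6) * r)^2 ≤ (ρ - κ*r/6)^2 := by
      refine pow_le_pow_left₀ (by positivity) h2 2
    have h4 : ((1 + 5*κ/6) * r)^2 = (1 + 5*κ/6)^2 * ζ := by rw [mul_pow]; nlinarith [hrr]
    -- (1+5κ/6)² ζ - ζ ≥ (5κ/3) ζ ≥ (5κ/3)(ρ²/4)
    have hζρ2 : ρ^2 ≤ 4 * ζ := by nlinarith
    nlinarith [sq_nonneg κ, mul_pos hκ0 hζ0]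

lemma summable_T (hV0 : Summable fun q : Fin d → ℤ => ‖Vc q‖)
    (hψ1 : ∀ l, ‖ψ l‖ ≤ 1) (n : Fin d → ℤ) :
    Summable fun l : Fin d → ℤ => ‖Vc (n - l)‖ * ‖ψ l‖ := by
  have h1 : Summable fun l : Fin d → ℤ => ‖Vc (n - l)‖ :=
    (Equiv.subLeft n).summable_iff.mpr hV0
  refine h1.of_nonneg_of_le (fun l => by positivity) (fun l => ?_)
  calc ‖Vc (n - l)‖ * ‖ψ l‖ ≤ ‖Vc (n - l)‖ * 1 :=
        mul_le_mul_of_nonneg_left (hψ1 l) (norm_nonneg _)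
    _ = ‖Vc (n - l)‖ := mul_one _

lemma psi_bound (hV0 : Summable fun q : Fin d → ℤ => ‖Vc q‖)
    (hψ1 : ∀ l, ‖ψ l‖ ≤ 1) {n : Fin d → ℤ}
    (hE : ((‖latticePt d B n + k‖ ^ 2 : ℝ) : ℂ) * ψ n + ∑' l, Vc (n - l) * ψ l
            = (ζ : ℂ) * ψ n)
    (hden : ζ + κ * ‖latticePt d B n‖ ^ 2 / 3 ≤ ‖latticePt d B n + k‖ ^ 2)
    (hκρ : 0 < κ * ‖latticePt d B n‖ ^ 2) :
    ‖ψ n‖ * (κ * ‖latticePt d B n‖ ^ 2 / 3) ≤ ∑' l, ‖Vc (n - l)‖ * ‖ψ l‖ := by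
  set c := ‖latticePt d B n + k‖ ^ 2 with hcdef
  have hSe : (∑' l, Vc (n - l) * ψ l) = ((ζ - c : ℝ) : ℂ) * ψ n := by
    push_cast
    linear_combination hE
  have hsumT := summable_T hV0 hψ1 n
  have hsum2 : Summable fun l : Fin d → ℤ => ‖Vc (n - l) * ψ l‖ := by
    refine hsumT.congr fun l => ?_
    rw [norm_mul]
  have h1 : ‖(∑' l, Vc (n - l) * ψ l)‖ ≤ ∑' l, ‖Vc (n - l)‖ * ‖ψ l‖ := by
    calc ‖(∑' l, Vc (n - l) * ψ l)‖ ≤ ∑' l, ‖Vc (n - l) * ψ l‖ := norm_tsum_le_tsum_norm hsum2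
      _ = ∑' l, ‖Vc (n - l)‖ * ‖ψ l‖ := tsum_congr fun l => norm_mul _ _
  rw [hSe] at h1
  rw [norm_mul] at h1
  have h2 : ‖((ζ - c : ℝ) : ℂ)‖ = c - ζ := by
    rw [Complex.norm_real, Real.norm_eq_abs]
    rw [abs_of_nonpos (by linarith)]
    ring
  rw [h2] at h1
  calc ‖ψ n‖ * (κ * ‖latticePt d B n‖ ^ 2 / 3) ≤ (c - ζ) * ‖ψ n‖ := by
        rw [mul_comm]
        exact mul_le_mul_of_nonneg_right (by linarith) (norm_nonneg _)
    _ ≤ ∑' l, ‖Vc (n - l)‖ * ‖ψ l‖ := h1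


lemma latticePt_sub (n l : Fin d → ℤ) :
    latticePt d B (n - l) = latticePt d B n - latticePt d B l := by
  simp only [latticePt, ← map_sub]
  congr 1
  funext i
  push_cast
  simp

set_option maxHeartbeats 1000000 in
/-- Splitting the convolution sum into three regions. -/
lemma T_split (hW : ∀ t : ℕ, Summable fun q : Fin d → ℤ => ‖latticePt d B q‖ ^ t * ‖Vc q‖)
    (hψ1 : ∀ l, ‖ψ l‖ ≤ 1) (n : Fin d → ℤ) (thr ρ2 cA cB cC : ℝ) (s₁ t₁ : ℕ)
    (hcA : 0 ≤ cA) (hcB : 0 ≤ cB) (hcC : 0 ≤ cC)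
    (hA : ∀ l, ‖latticePt d B l‖ < thr → 1 ≤ cA * ‖latticePt d B (n - l)‖ ^ s₁)
    (hB : ∀ l, thr ≤ ‖latticePt d B l‖ → ρ2 ≤ ‖latticePt d B l‖ → ‖ψ l‖ ≤ cB)
    (hC : ∀ l, ‖latticePt d B l‖ < ρ2 → 1 ≤ cC * ‖latticePt d B (n - l)‖ ^ t₁) :
    (∑' l, ‖Vc (n - l)‖ * ‖ψ l‖) ≤
      cA * (∑' q, ‖latticePt d B q‖ ^ s₁ * ‖Vc q‖)
      + cB * (∑' q, ‖latticePt d B q‖ ^ 0 * ‖Vc q‖)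
      + cC * (∑' q, ‖latticePt d B q‖ ^ t₁ * ‖Vc q‖) := by
  have hsub : ∀ (t : ℕ), Summable fun l : Fin d → ℤ =>
      ‖latticePt d B (n - l)‖ ^ t * ‖Vc (n - l)‖ :=
    fun t => (((Equiv.subLeft n).summable_iff
      (f := fun q => ‖latticePt d B q‖ ^ t * ‖Vc q‖)).mpr (hW t)).congr (fun l => by simp)
  have htsub : ∀ (t : ℕ), (∑' l, ‖latticePt d B (n - l)‖ ^ t * ‖Vc (n - l)‖)
      = ∑' q, ‖latticePt d B q‖ ^ t * ‖Vc q‖ := by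
    intro t
    rw [← (Equiv.subLeft n).tsum_eq (f := fun q => ‖latticePt d B q‖ ^ t * ‖Vc q‖)]
    exact tsum_congr (fun l => by simp)
  have hg : Summable fun l : Fin d → ℤ =>
      cA * (‖latticePt d B (n - l)‖ ^ s₁ * ‖Vc (n - l)‖)
      + cB * (‖latticePt d B (n - l)‖ ^ 0 * ‖Vc (n - l)‖)
      + cC * (‖latticePt d B (n - l)‖ ^ t₁ * ‖Vc (n - l)‖) :=
    (((hsub s₁).mul_left cA).add ((hsub 0).mul_left cB)).add ((hsub t₁).mul_left cC)
  have hV0' : Summable fun l : Fin d → ℤ => ‖Vc (n - l)‖ :=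
    (hsub 0).congr (fun l => by rw [pow_zero, one_mul])
  have hf : Summable fun l : Fin d → ℤ => ‖Vc (n - l)‖ * ‖ψ l‖ :=
    hV0'.of_nonneg_of_le (fun l => by positivity)
      (fun l => by
        calc ‖Vc (n - l)‖ * ‖ψ l‖ ≤ ‖Vc (n - l)‖ * 1 :=
              mul_le_mul_of_nonneg_left (hψ1 l) (norm_nonneg _)
          _ = ‖Vc (n - l)‖ := mul_one _)
  have key : (∑' l, ‖Vc (n - l)‖ * ‖ψ l‖) ≤ ∑' l,
      (cA * (‖latticePt d B (n - l)‖ ^ s₁ * ‖Vc (n - l)‖)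
      + cB * (‖latticePt d B (n - l)‖ ^ 0 * ‖Vc (n - l)‖)
      + cC * (‖latticePt d B (n - l)‖ ^ t₁ * ‖Vc (n - l)‖)) := by
    refine hf.tsum_le_tsum (fun l => ?_) hg
    have hVnn : (0:ℝ) ≤ ‖Vc (n - l)‖ := norm_nonneg _
    have hψnn : (0:ℝ) ≤ ‖ψ l‖ := norm_nonneg _
    rcases lt_or_ge ‖latticePt d B l‖ thr with hl | hl
    · have h1 := hA l hl
      have : ‖Vc (n - l)‖ * ‖ψ l‖ ≤ cA * (‖latticePt d B (n - l)‖ ^ s₁ * ‖Vc (n - l)‖) := by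
        calc ‖Vc (n - l)‖ * ‖ψ l‖ ≤ ‖Vc (n - l)‖ * 1 :=
              mul_le_mul_of_nonneg_left (hψ1 l) hVnn
          _ = 1 * ‖Vc (n - l)‖ := by ring
          _ ≤ (cA * ‖latticePt d B (n - l)‖ ^ s₁) * ‖Vc (n - l)‖ :=
              mul_le_mul_of_nonneg_right h1 hVnn
          _ = cA * (‖latticePt d B (n - l)‖ ^ s₁ * ‖Vc (n - l)‖) := by ring
      refine le_trans this ?_
      have h2 : (0:ℝ) ≤ cB * (‖latticePt d B (n - l)‖ ^ 0 * ‖Vc (n - l)‖) := by positivity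
      have h3 : (0:ℝ) ≤ cC * (‖latticePt d B (n - l)‖ ^ t₁ * ‖Vc (n - l)‖) := by positivity
      linarith
    · rcases le_or_gt ρ2 ‖latticePt d B l‖ with hl2 | hl2
      · have h1 := hB l hl hl2
        have : ‖Vc (n - l)‖ * ‖ψ l‖ ≤ cB * (‖latticePt d B (n - l)‖ ^ 0 * ‖Vc (n - l)‖) := by
          rw [pow_zero, one_mul]
          calc ‖Vc (n - l)‖ * ‖ψ l‖ ≤ ‖Vc (n - l)‖ * cB :=
                mul_le_mul_of_nonneg_left h1 hVnn
            _ = cB * ‖Vc (n - l)‖ := by ring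
        have h2 : (0:ℝ) ≤ cA * (‖latticePt d B (n - l)‖ ^ s₁ * ‖Vc (n - l)‖) := by positivity
        have h3 : (0:ℝ) ≤ cC * (‖latticePt d B (n - l)‖ ^ t₁ * ‖Vc (n - l)‖) := by positivity
        linarith
      · have h1 := hC l hl2
        have : ‖Vc (n - l)‖ * ‖ψ l‖ ≤ cC * (‖latticePt d B (n - l)‖ ^ t₁ * ‖Vc (n - l)‖) := by
          calc ‖Vc (n - l)‖ * ‖ψ l‖ ≤ ‖Vc (n - l)‖ * 1 :=
                mul_le_mul_of_nonneg_left (hψ1 l) hVnn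
            _ = 1 * ‖Vc (n - l)‖ := by ring
            _ ≤ (cC * ‖latticePt d B (n - l)‖ ^ t₁) * ‖Vc (n - l)‖ :=
                mul_le_mul_of_nonneg_right h1 hVnn
            _ = cC * (‖latticePt d B (n - l)‖ ^ t₁ * ‖Vc (n - l)‖) := by ring
        have h2 : (0:ℝ) ≤ cA * (‖latticePt d B (n - l)‖ ^ s₁ * ‖Vc (n - l)‖) := by positivity
        have h3 : (0:ℝ) ≤ cB * (‖latticePt d B (n - l)‖ ^ 0 * ‖Vc (n - l)‖) := by positivity
        linarith
  refine key.trans ?_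
  rw [Summable.tsum_add (((hsub s₁).mul_left cA).add ((hsub 0).mul_left cB)) ((hsub t₁).mul_left cC),
    Summable.tsum_add ((hsub s₁).mul_left cA) ((hsub 0).mul_left cB),
    tsum_mul_left, tsum_mul_left, tsum_mul_left, htsub s₁, htsub 0, htsub t₁]


lemma kr_le {κ ρ : ℝ} (hκ0 : 0 < κ) (hκ1 : κ ≤ 1) (hρ1 : 1 ≤ ρ) {a a' b b' : ℝ}
    (ha : a' ≤ a) (hb : b ≤ b') : κ ^ a * ρ ^ b ≤ κ ^ a' * ρ ^ b' := by
  have h1 : κ ^ a ≤ κ ^ a' := Real.rpow_le_rpow_of_exponent_ge hκ0 hκ1 ha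
  have h2 : ρ ^ b ≤ ρ ^ b' := Real.rpow_le_rpow_of_exponent_le hρ1 hb
  exact mul_le_mul h1 h2 (Real.rpow_nonneg (by linarith) _) (Real.rpow_nonneg (by linarith) _)

lemma exchange {κ ρ : ℝ} (hκ0 : 0 < κ) (hρ0 : 0 ≤ ρ) {d : ℕ} (hd : 2 ≤ d)
    (hκd : κ ^ (-(d:ℝ)/((d:ℝ)-1)) ≤ ρ) (c : ℝ) (hc : 0 ≤ c) :
    κ ^ (-((d:ℝ)*c)) ≤ ρ ^ (((d:ℝ)-1)*c) := by
  have hd1 : (0:ℝ) < (d:ℝ) - 1 := by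
    have : (2:ℝ) ≤ (d:ℝ) := by exact_mod_cast hd
    linarith
  have h1 := Real.rpow_le_rpow (Real.rpow_nonneg hκ0.le _) hκd (by positivity : (0:ℝ) ≤ ((d:ℝ)-1)*c)
  rw [← Real.rpow_mul hκ0.le] at h1
  have he : -(d:ℝ)/((d:ℝ)-1) * (((d:ℝ)-1)*c) = -((d:ℝ)*c) := by
    field_simp
  rwa [he] at h1

set_option maxHeartbeats 1000000 in
lemma final_combine (d m j : ℕ) (hd : 2 ≤ d) (hjm : j + 1 ≤ m)
    {κ ρ WA W0v WC Mj : ℝ}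
    (hκ0 : 0 < κ) (hκ1 : κ ≤ 1) (hρ1 : 1 ≤ ρ)
    (hκd : κ ^ (-(d:ℝ)/((d:ℝ)-1)) ≤ ρ)
    (hWA : 0 ≤ WA) (hW0 : 0 ≤ W0v) (hWC : 0 ≤ WC) (hMj : 0 ≤ Mj) :
    3/(κ*ρ^2) * ( ((1+(m:ℝ))/(κ*ρ)) ^ ((j:ℝ) + (d:ℝ)*(m:ℝ)) * WA
      + (Mj * κ ^ (-(j:ℝ)) * (ρ/2) ^ ((-(3*(j:ℝ)+1))/2)) * W0v
      + (2/ρ) ^ (3*(m:ℝ)) * WC )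
    ≤ (3*((1+(m:ℝ)) ^ ((j:ℝ)+(d:ℝ)*(m:ℝ)) * WA + 2 ^ (3*(j:ℝ)+1) * W0v * Mj
        + 2 ^ (3*(m:ℝ)) * WC) + 1)
      * (κ ^ (-((j:ℝ)+1)) * ρ ^ ((-(3*((j:ℝ)+1)+1))/2)) := by
  have hρ0 : (0:ℝ) < ρ := lt_of_lt_of_le one_pos hρ1
  have hm0 : (0:ℝ) ≤ (m:ℝ) := Nat.cast_nonneg m
  have hj0 : (0:ℝ) ≤ (j:ℝ) := Nat.cast_nonneg j
  have hjm' : (j:ℝ) + 1 ≤ (m:ℝ) := by exact_mod_cast hjm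
  have hd' : (2:ℝ) ≤ (d:ℝ) := by exact_mod_cast hd
  set s : ℝ := (j:ℝ) + (d:ℝ)*(m:ℝ) with hs
  have hs0 : 0 ≤ s := by positivity
  set X : ℝ := κ ^ (-((j:ℝ)+1)) * ρ ^ ((-(3*((j:ℝ)+1)+1))/2) with hX
  have hX0 : 0 < X := by
    exact mul_pos (Real.rpow_pos_of_pos hκ0 _) (Real.rpow_pos_of_pos hρ0 _)
  have hκinv : κ⁻¹ = κ ^ (-1:ℝ) := (Real.rpow_neg_one κ).symm
  have hρinv : (ρ^2)⁻¹ = ρ ^ (-2:ℝ) := by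
    rw [show ((2:ℝ)) = ((2:ℕ):ℝ) by norm_num, Real.rpow_neg hρ0.le, Real.rpow_natCast]
  -- Claim A
  have claimA : κ⁻¹ * (ρ^2)⁻¹ * (((1+(m:ℝ))/(κ*ρ)) ^ s * WA)
      ≤ ((1+(m:ℝ)) ^ s * WA) * X := by
    have e1 : ((1+(m:ℝ))/(κ*ρ)) ^ s = (1+(m:ℝ)) ^ s * (κ ^ s * ρ ^ s)⁻¹ := by
      rw [Real.div_rpow (by positivity) (by positivity), div_eq_mul_inv,
        Real.mul_rpow hκ0.le hρ0.le]
    have e2 : (κ ^ s * ρ ^ s)⁻¹ = κ ^ (-s) * ρ ^ (-s) := by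
      rw [mul_inv, ← Real.rpow_neg hκ0.le, ← Real.rpow_neg hρ0.le]
    have e3 : κ⁻¹ * (ρ^2)⁻¹ * ((1+(m:ℝ)) ^ s * (κ ^ (-s) * ρ ^ (-s)) * WA)
        = ((1+(m:ℝ)) ^ s * WA) * (κ ^ (-1-s) * ρ ^ (-2-s)) := by
      rw [hκinv, hρinv, show (-1-s : ℝ) = -1 + -s by ring, show (-2-s:ℝ) = -2 + -s by ring,
        Real.rpow_add hκ0, Real.rpow_add hρ0]
      ring
    rw [e1, e2, e3]
    refine mul_le_mul_of_nonneg_left ?_ (by positivity)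
    -- κ^(-1-s) * ρ^(-2-s) ≤ X
    have e4 : κ ^ (-1-s : ℝ) = κ ^ (-((j:ℝ)+1)) * κ ^ (-((d:ℝ)*(m:ℝ))) := by
      rw [← Real.rpow_add hκ0]
      congr 1
      rw [hs]; ring
    have e5 := exchange hκ0 hρ0.le hd hκd (m:ℝ) hm0
    rw [hX, e4]
    calc κ ^ (-((j:ℝ)+1)) * κ ^ (-((d:ℝ)*(m:ℝ))) * ρ ^ (-2-s:ℝ)
        ≤ κ ^ (-((j:ℝ)+1)) * ρ ^ (((d:ℝ)-1)*(m:ℝ)) * ρ ^ (-2-s:ℝ) := by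
          refine mul_le_mul_of_nonneg_right (mul_le_mul_of_nonneg_left e5 ?_) ?_
          · exact (Real.rpow_pos_of_pos hκ0 _).le
          · exact (Real.rpow_pos_of_pos hρ0 _).le
      _ = κ ^ (-((j:ℝ)+1)) * ρ ^ (((d:ℝ)-1)*(m:ℝ) + (-2-s)) := by
          rw [mul_assoc, ← Real.rpow_add hρ0]
      _ ≤ κ ^ (-((j:ℝ)+1)) * ρ ^ ((-(3*((j:ℝ)+1)+1))/2) := by
          refine mul_le_mul_of_nonneg_left
            (Real.rpow_le_rpow_of_exponent_le hρ1 (by rw [hs]; ring_nf; linarith)) ?_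
          exact (Real.rpow_pos_of_pos hκ0 _).le
  -- Claim B
  have claimB : κ⁻¹ * (ρ^2)⁻¹ * ((Mj * κ ^ (-(j:ℝ)) * (ρ/2) ^ ((-(3*(j:ℝ)+1))/2)) * W0v)
      ≤ (2 ^ (3*(j:ℝ)+1) * W0v * Mj) * X := by
    have e1 : (ρ/2) ^ ((-(3*(j:ℝ)+1))/2) = ρ ^ ((-(3*(j:ℝ)+1))/2) * 2 ^ ((3*(j:ℝ)+1)/2) := by
      rw [Real.div_rpow hρ0.le (by norm_num), div_eq_mul_inv, ← Real.rpow_neg (by norm_num)]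
      congr 1
      ring
    have e2 : 2 ^ ((3*(j:ℝ)+1)/2) ≤ (2:ℝ) ^ (3*(j:ℝ)+1) :=
      Real.rpow_le_rpow_of_exponent_le one_le_two (by linarith)
    have e3 : κ⁻¹ * (ρ^2)⁻¹ * ((Mj * κ ^ (-(j:ℝ)) * (ρ ^ ((-(3*(j:ℝ)+1))/2) * 2 ^ ((3*(j:ℝ)+1)/2))) * W0v)
        = (2 ^ ((3*(j:ℝ)+1)/2) * W0v * Mj) * (κ ^ (-((j:ℝ)+1)) * ρ ^ ((-(3*(j:ℝ)+1))/2 + -2)) := by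
      rw [hκinv, hρinv, show (-((j:ℝ)+1)) = -1 + -(j:ℝ) by ring,
        Real.rpow_add hκ0, Real.rpow_add hρ0]
      ring
    rw [e1, e3]
    have e4 : κ ^ (-((j:ℝ)+1)) * ρ ^ ((-(3*(j:ℝ)+1))/2 + -2)
        ≤ κ ^ (-((j:ℝ)+1)) * ρ ^ ((-(3*((j:ℝ)+1)+1))/2) := by
      refine mul_le_mul_of_nonneg_left
        (Real.rpow_le_rpow_of_exponent_le hρ1 (by linarith)) ?_
      exact (Real.rpow_pos_of_pos hκ0 _).le
    calc (2 ^ ((3*(j:ℝ)+1)/2) * W0v * Mj) * (κ ^ (-((j:ℝ)+1)) * ρ ^ ((-(3*(j:ℝ)+1))/2 + -2))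
        ≤ (2 ^ ((3*(j:ℝ)+1)/2) * W0v * Mj) * X := by
          refine mul_le_mul_of_nonneg_left e4 (by positivity)
      _ ≤ (2 ^ (3*(j:ℝ)+1) * W0v * Mj) * X := by
          refine mul_le_mul_of_nonneg_right ?_ hX0.le
          refine mul_le_mul_of_nonneg_right (mul_le_mul_of_nonneg_right e2 hW0) hMj
  -- Claim C
  have claimC : κ⁻¹ * (ρ^2)⁻¹ * ((2/ρ) ^ (3*(m:ℝ)) * WC)
      ≤ (2 ^ (3*(m:ℝ)) * WC) * X := by
    have e1 : (2/ρ) ^ (3*(m:ℝ)) = 2 ^ (3*(m:ℝ)) * ρ ^ (-(3*(m:ℝ))) := by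
      rw [Real.div_rpow (by norm_num) hρ0.le, div_eq_mul_inv, ← Real.rpow_neg hρ0.le]
    have e3 : κ⁻¹ * (ρ^2)⁻¹ * ((2 ^ (3*(m:ℝ)) * ρ ^ (-(3*(m:ℝ)))) * WC)
        = (2 ^ (3*(m:ℝ)) * WC) * (κ ^ (-1:ℝ) * ρ ^ (-(3*(m:ℝ)) + -2)) := by
      rw [hκinv, hρinv, Real.rpow_add hρ0]
      ring
    rw [e1, e3]
    refine mul_le_mul_of_nonneg_left ?_ (by positivity)
    exact kr_le hκ0 hκ1 hρ1 (by linarith) (by linarith)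
  -- combine
  have hsplit : 3/(κ*ρ^2) * ( ((1+(m:ℝ))/(κ*ρ)) ^ s * WA
      + (Mj * κ ^ (-(j:ℝ)) * (ρ/2) ^ ((-(3*(j:ℝ)+1))/2)) * W0v
      + (2/ρ) ^ (3*(m:ℝ)) * WC )
      = 3 * (κ⁻¹ * (ρ^2)⁻¹ * (((1+(m:ℝ))/(κ*ρ)) ^ s * WA)
        + κ⁻¹ * (ρ^2)⁻¹ * ((Mj * κ ^ (-(j:ℝ)) * (ρ/2) ^ ((-(3*(j:ℝ)+1))/2)) * W0v)
        + κ⁻¹ * (ρ^2)⁻¹ * ((2/ρ) ^ (3*(m:ℝ)) * WC)) := by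
    rw [div_eq_mul_inv, mul_inv]
    ring
  rw [hsplit]
  have hfin : 3 * (((1+(m:ℝ)) ^ s * WA) * X + (2 ^ (3*(j:ℝ)+1) * W0v * Mj) * X
      + (2 ^ (3*(m:ℝ)) * WC) * X)
      ≤ (3*((1+(m:ℝ)) ^ s * WA + 2 ^ (3*(j:ℝ)+1) * W0v * Mj + 2 ^ (3*(m:ℝ)) * WC) + 1) * X := by
    nlinarith [hX0]
  calc 3 * (κ⁻¹ * (ρ^2)⁻¹ * (((1+(m:ℝ))/(κ*ρ)) ^ s * WA)
        + κ⁻¹ * (ρ^2)⁻¹ * ((Mj * κ ^ (-(j:ℝ)) * (ρ/2) ^ ((-(3*(j:ℝ)+1))/2)) * W0v)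
        + κ⁻¹ * (ρ^2)⁻¹ * ((2/ρ) ^ (3*(m:ℝ)) * WC))
      ≤ 3 * (((1+(m:ℝ)) ^ s * WA) * X + (2 ^ (3*(j:ℝ)+1) * W0v * Mj) * X
        + (2 ^ (3*(m:ℝ)) * WC) * X) := by
        have := add_le_add (add_le_add claimA claimB) claimC
        linarith
    _ ≤ _ := hfin


lemma regionA_bound {κ r ρ xl rc m' a : ℝ} (hκ0 : 0 < κ) (hκ1 : κ ≤ 1) (hr : 0 ≤ r) (ha : 0 ≤ a)
    (hma : a + 1 ≤ m') (hn : (1+(a+1)*κ)*r ≤ ρ) (hl : xl < (1+a*κ)*r) (hx : ρ - xl ≤ rc) :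
    κ*ρ ≤ (1 + m') * rc := by
  nlinarith [mul_nonneg (mul_nonneg hκ0.le hκ0.le) hr, mul_nonneg hκ0.le hr,
    mul_nonneg (mul_nonneg ha hκ0.le) hr, mul_nonneg (mul_nonneg hκ0.le hr) (sub_nonneg.mpr hma),
    mul_nonneg (mul_nonneg (mul_nonneg ha hκ0.le) hκ0.le) hr]

end Stmt12Aux

set_option maxHeartbeats 2000000 in
open Stmt12Aux in
/-- Fourier coefficient decay for high-energy Bloch eigenfunctions (Lemma 4.1).
The eigenfunction is described by its Fourier coefficients `ψ : Λ† → ℂ`, normalized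
(`∑ |ψ_n|² = 1`) and satisfying the recursion `|n+k|²ψ_n + ∑_l V_{n-l}ψ_l = ζψ_n`;
smoothness of `V` is encoded by finiteness of all weighted norms
`∑ |n|^{2s} |V_n|² < ∞`. Then there is `M_m > 0` (independent of `ϰ`, `k`, `ψ`, `ζ`)
such that `|ψ_n| < M_m ϰ^{-m} |n|^{-(3m+1)/2}` whenever `|n| ≥ (1+mϰ)√ζ` and
`ζ ≥ max{36Q²ϰ⁻², (1+mϰ)^{2/(d-1)}ϰ^{-2d/(d-1)}}`, `|k| ≤ Q`. -/
theorem stmt12 (d : ℕ) (hd : 2 ≤ d)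
    (B : (Fin d → ℝ) ≃ₗ[ℝ] EuclideanSpace ℝ (Fin d))
    (Vc : (Fin d → ℤ) → ℂ)
    (hVsm : ∀ s : ℕ, Summable fun l : Fin d → ℤ => ‖latticePt d B l‖ ^ (2 * s) * ‖Vc l‖ ^ 2)
    (Q : ℝ) (hQ : 0 < Q) (m : ℕ) (hm : 1 ≤ m) :
    ∃ M : ℝ, 0 < M ∧ ∀ κ : ℝ, κ ∈ Set.Ioo (0:ℝ) 1 →
      ∀ (k : EuclideanSpace ℝ (Fin d)) (ζ : ℝ) (ψ : (Fin d → ℤ) → ℂ),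
        ‖k‖ ≤ Q →
        max (36 * Q ^ 2 * κ⁻¹ ^ 2)
            ((1 + (m : ℝ) * κ) ^ ((2:ℝ)/((d:ℝ)-1)) * κ ^ (-(2:ℝ)*(d:ℝ)/((d:ℝ)-1))) ≤ ζ →
        Summable (fun n => ‖ψ n‖ ^ 2) →
        (∑' n, ‖ψ n‖ ^ 2) = 1 →
        (∀ n : Fin d → ℤ,
          ((‖latticePt d B n + k‖ ^ 2 : ℝ) : ℂ) * ψ n + ∑' l, Vc (n - l) * ψ l
            = (ζ : ℂ) * ψ n) →
        ∀ n : Fin d → ℤ, (1 + (m : ℝ) * κ) * Real.sqrt ζ ≤ ‖latticePt d B n‖ →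
          ‖ψ n‖ < M * κ ^ (-(m:ℝ)) * ‖latticePt d B n‖ ^ (-(3*(m:ℝ)+1)/2) := by
  classical
  have hW : ∀ t : ℕ, Summable fun q : Fin d → ℤ => ‖latticePt d B q‖ ^ t * ‖Vc q‖ :=
    summable_weighted hVsm
  have hWnn : ∀ t : ℕ, 0 ≤ ∑' q : Fin d → ℤ, ‖latticePt d B q‖ ^ t * ‖Vc q‖ :=
    fun t => tsum_nonneg (fun q => by positivity)
  have main : ∀ j : ℕ, 1 ≤ j → j ≤ m →
      ∃ M : ℝ, 0 < M ∧ ∀ κ : ℝ, κ ∈ Set.Ioo (0:ℝ) 1 →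
      ∀ (k : EuclideanSpace ℝ (Fin d)) (ζ : ℝ) (ψ : (Fin d → ℤ) → ℂ),
        ‖k‖ ≤ Q →
        max (36 * Q ^ 2 * κ⁻¹ ^ 2)
            ((1 + (m : ℝ) * κ) ^ ((2:ℝ)/((d:ℝ)-1)) * κ ^ (-(2:ℝ)*(d:ℝ)/((d:ℝ)-1))) ≤ ζ →
        Summable (fun n => ‖ψ n‖ ^ 2) →
        (∑' n, ‖ψ n‖ ^ 2) = 1 →
        (∀ n : Fin d → ℤ,
          ((‖latticePt d B n + k‖ ^ 2 : ℝ) : ℂ) * ψ n + ∑' l, Vc (n - l) * ψ l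
            = (ζ : ℂ) * ψ n) →
        ∀ n : Fin d → ℤ, (1 + (j : ℝ) * κ) * Real.sqrt ζ ≤ ‖latticePt d B n‖ →
          ‖ψ n‖ ≤ M * κ ^ (-(j:ℝ)) * ‖latticePt d B n‖ ^ (-(3*(j:ℝ)+1)/2) := by
    intro j hj1
    induction j, hj1 using Nat.le_induction with
    | base =>
        intro _
        refine ⟨3 * (∑' q : Fin d → ℤ, ‖latticePt d B q‖ ^ 0 * ‖Vc q‖) + 1,
          by have := hWnn 0; linarith, ?_⟩
        intro κ hκ k ζ ψ hk hζ hS hN hE n hn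
        obtain ⟨hκ0, hκ1⟩ := hκ
        obtain ⟨hζ0, hsqκ, hgt1, hQs⟩ := sqrtζ_facts hd ⟨hκ0, hκ1⟩ hQ hm hζ
        have hψ1 := psi_le_one hS hN
        have hV0 : Summable fun q : Fin d → ℤ => ‖Vc q‖ :=
          (hW 0).congr (fun q => by rw [pow_zero, one_mul])
        set ρ := ‖latticePt d B n‖ with hρdef
        have hr0 : 0 < Real.sqrt ζ := Real.sqrt_pos.mpr hζ0
        have hn1 : (1 + 1 * κ) * Real.sqrt ζ ≤ ρ := by exact_mod_cast hn
        have hρζ : Real.sqrt ζ ≤ ρ := by nlinarith [mul_nonneg hκ0.le hr0.le]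
        have hρ1 : 1 < ρ := lt_of_lt_of_le (lt_of_lt_of_le hgt1 hsqκ) hρζ
        have hρ0 : (0:ℝ) < ρ := by linarith
        have hden := den_bound (B := B) (j := 1) ⟨hκ0, hκ1⟩ hk hζ0 hQs (le_refl 1) (n := n) hn
        have hpb := psi_bound hV0 hψ1 (hE n) hden (by positivity)
        have hT : (∑' l, ‖Vc (n - l)‖ * ‖ψ l‖)
            ≤ ∑' q : Fin d → ℤ, ‖latticePt d B q‖ ^ 0 * ‖Vc q‖ := by
          have hsub : Summable fun l : Fin d → ℤ =>
              ‖latticePt d B (n - l)‖ ^ 0 * ‖Vc (n - l)‖ :=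
            (((Equiv.subLeft n).summable_iff
              (f := fun q => ‖latticePt d B q‖ ^ 0 * ‖Vc q‖)).mpr (hW 0)).congr (fun l => by simp)
          have hf : Summable fun l : Fin d → ℤ => ‖Vc (n - l)‖ * ‖ψ l‖ := by
            refine (hsub.congr (fun l => by rw [pow_zero, one_mul])).of_nonneg_of_le
              (fun l => by positivity) (fun l => ?_)
            calc ‖Vc (n - l)‖ * ‖ψ l‖ ≤ ‖Vc (n - l)‖ * 1 :=
                  mul_le_mul_of_nonneg_left (hψ1 l) (norm_nonneg _)
              _ = ‖Vc (n - l)‖ := mul_one _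
          have h2 : (∑' l, ‖Vc (n - l)‖ * ‖ψ l‖) ≤
              ∑' l, ‖latticePt d B (n - l)‖ ^ 0 * ‖Vc (n - l)‖ := by
            refine hf.tsum_le_tsum (fun l => ?_) hsub
            rw [pow_zero, one_mul]
            calc ‖Vc (n - l)‖ * ‖ψ l‖ ≤ ‖Vc (n - l)‖ * 1 :=
                  mul_le_mul_of_nonneg_left (hψ1 l) (norm_nonneg _)
              _ = ‖Vc (n - l)‖ := mul_one _
          refine h2.trans_eq ?_
          rw [← (Equiv.subLeft n).tsum_eq (f := fun q => ‖latticePt d B q‖ ^ 0 * ‖Vc q‖)]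
          exact tsum_congr (fun l => by simp)
        set W0 := ∑' q : Fin d → ℤ, ‖latticePt d B q‖ ^ 0 * ‖Vc q‖ with hW0def
        have hW0nn : 0 ≤ W0 := hWnn 0
        have hfin : ‖ψ n‖ ≤ 3 * W0 * (κ⁻¹ * (ρ^2)⁻¹) := by
          have h3 : ‖ψ n‖ * (κ * ρ^2 / 3) ≤ W0 := le_trans hpb hT
          have heq : 3 * W0 * (κ⁻¹ * (ρ^2)⁻¹) = (3*W0) / (κ * ρ^2) := by
            rw [div_eq_mul_inv, mul_inv]
          rw [heq, le_div_iff₀ (by positivity)]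
          nlinarith
        refine hfin.trans ?_
        have hκe : κ ^ (-((1:ℕ):ℝ)) = κ⁻¹ := by
          have h5 : -((1:ℕ):ℝ) = (-1:ℝ) := by norm_num
          rw [h5, Real.rpow_neg_one]
        have hρe : ρ ^ (-(3*((1:ℕ):ℝ)+1)/2) = (ρ^2)⁻¹ := by
          have h5 : (-(3*((1:ℕ):ℝ)+1)/2) = -(((2:ℕ):ℝ)) := by norm_num
          rw [h5, Real.rpow_neg hρ0.le, Real.rpow_natCast]
        rw [hκe, hρe, mul_assoc]
        have : (0:ℝ) ≤ κ⁻¹ * (ρ^2)⁻¹ := by positivity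
        nlinarith
    | succ j hj ih =>
        intro hjm
        obtain ⟨Mj, hMj0, hMj⟩ := ih (by omega)
        set WA := ∑' q : Fin d → ℤ, ‖latticePt d B q‖ ^ (j + d*m) * ‖Vc q‖ with hWAdef
        set W0 := ∑' q : Fin d → ℤ, ‖latticePt d B q‖ ^ 0 * ‖Vc q‖ with hW0def
        set WC := ∑' q : Fin d → ℤ, ‖latticePt d B q‖ ^ (3*m) * ‖Vc q‖ with hWCdef
        have hWAnn : 0 ≤ WA := hWnn _
        have hW0nn : 0 ≤ W0 := hWnn 0
        have hWCnn : 0 ≤ WC := hWnn _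
        refine ⟨3*((1+(m:ℝ)) ^ ((j:ℝ)+(d:ℝ)*(m:ℝ)) * WA + 2 ^ (3*(j:ℝ)+1) * W0 * Mj
          + 2 ^ (3*(m:ℝ)) * WC) + 1, ?_, ?_⟩
        · have h1 : (0:ℝ) ≤ (1+(m:ℝ)) ^ ((j:ℝ)+(d:ℝ)*(m:ℝ)) * WA :=
            mul_nonneg (Real.rpow_nonneg (by positivity) _) hWAnn
          have h2 : (0:ℝ) ≤ 2 ^ (3*(j:ℝ)+1) * W0 * Mj :=
            mul_nonneg (mul_nonneg (Real.rpow_nonneg (by norm_num) _) hW0nn) hMj0.le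
          have h3 : (0:ℝ) ≤ 2 ^ (3*(m:ℝ)) * WC :=
            mul_nonneg (Real.rpow_nonneg (by norm_num) _) hWCnn
          linarith
        intro κ hκ k ζ ψ hk hζ hS hN hE n hn
        obtain ⟨hκ0, hκ1⟩ := hκ
        obtain ⟨hζ0, hsqκ, hgt1, hQs⟩ := sqrtζ_facts hd ⟨hκ0, hκ1⟩ hQ hm hζ
        have hψ1 := psi_le_one hS hN
        have hV0 : Summable fun q : Fin d → ℤ => ‖Vc q‖ :=
          (hW 0).congr (fun q => by rw [pow_zero, one_mul])
        set ρ := ‖latticePt d B n‖ with hρdef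
        have hr0 : 0 < Real.sqrt ζ := Real.sqrt_pos.mpr hζ0
        have hcast : ((j+1:ℕ):ℝ) = (j:ℝ)+1 := by push_cast; ring
        have hn' : (1 + ((j:ℝ)+1) * κ) * Real.sqrt ζ ≤ ρ := by rw [← hcast]; exact hn
        have hj1' : (1:ℝ) ≤ (j:ℝ) := by exact_mod_cast hj
        have hjm' : (j:ℝ) + 1 ≤ (m:ℝ) := by exact_mod_cast hjm
        have hj0 : (0:ℝ) ≤ (j:ℝ) := Nat.cast_nonneg j
        have hρζ : Real.sqrt ζ ≤ ρ := by
          nlinarith [mul_nonneg (mul_nonneg (by positivity : (0:ℝ) ≤ (j:ℝ)+1) hκ0.le) hr0.le]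
        have hρ1 : 1 < ρ := lt_of_lt_of_le (lt_of_lt_of_le hgt1 hsqκ) hρζ
        have hρ0 : (0:ℝ) < ρ := by linarith
        have hκd : κ ^ (-(d:ℝ)/((d:ℝ)-1)) ≤ ρ := hsqκ.trans hρζ
        have hden := den_bound (B := B) ⟨hκ0, hκ1⟩ hk hζ0 hQs (Nat.le_add_left 1 j) (n := n) hn
        have hpb := psi_bound hV0 hψ1 (hE n) hden (by positivity)
        -- region constants
        set thr := (1 + (j:ℝ)*κ) * Real.sqrt ζ with hthrdef
        set cA := ((1+(m:ℝ))/(κ*ρ)) ^ ((j:ℝ) + (d:ℝ)*(m:ℝ)) with hcAdef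
        set cB := Mj * κ ^ (-(j:ℝ)) * (ρ/2) ^ ((-(3*(j:ℝ)+1))/2) with hcBdef
        set cC := (2/ρ) ^ (3*(m:ℝ)) with hcCdef
        have hcA0 : 0 ≤ cA := Real.rpow_nonneg (by positivity) _
        have hcB0 : 0 ≤ cB := by
          refine mul_nonneg (mul_nonneg hMj0.le (Real.rpow_nonneg hκ0.le _))
            (Real.rpow_nonneg (by positivity) _)
        have hcC0 : 0 ≤ cC := Real.rpow_nonneg (by positivity) _
        have hA : ∀ l, ‖latticePt d B l‖ < thr →
            1 ≤ cA * ‖latticePt d B (n - l)‖ ^ (j + d*m) := by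
          intro l hl
          set rc := ‖latticePt d B (n - l)‖ with hrcdef
          have hx : ρ - ‖latticePt d B l‖ ≤ rc := by
            rw [hrcdef, latticePt_sub]
            exact le_trans (by linarith [norm_sub_norm_le (latticePt d B n) (latticePt d B l)])
              (le_refl _)
          have hbound : κ*ρ ≤ (1 + (m:ℝ)) * rc :=
            regionA_bound hκ0 hκ1.le hr0.le (by positivity) hjm' hn' hl hx
          have hrc0 : 0 < rc := by nlinarith
          have hbase : 1 ≤ (1+(m:ℝ)) * rc / (κ*ρ) := by
            rw [le_div_iff₀ (by positivity)]
            linarith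
          have h1 : 1 ≤ ((1+(m:ℝ)) * rc / (κ*ρ)) ^ ((j:ℝ) + (d:ℝ)*(m:ℝ)) :=
            Real.one_le_rpow hbase (by positivity)
          have h2 : ((1+(m:ℝ)) * rc / (κ*ρ)) ^ ((j:ℝ) + (d:ℝ)*(m:ℝ)) = cA * rc ^ (j + d*m) := by
            rw [show (1+(m:ℝ)) * rc / (κ*ρ) = ((1+(m:ℝ))/(κ*ρ)) * rc by ring,
              Real.mul_rpow (by positivity) hrc0.le, hcAdef]
            congr 1
            rw [show ((j:ℝ) + (d:ℝ)*(m:ℝ)) = ((j + d*m : ℕ):ℝ) by push_cast; ring,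
              Real.rpow_natCast]
          rwa [h2] at h1
        have hB : ∀ l, thr ≤ ‖latticePt d B l‖ → ρ/2 ≤ ‖latticePt d B l‖ → ‖ψ l‖ ≤ cB := by
          intro l hl hl2
          have h1 := hMj κ ⟨hκ0, hκ1⟩ k ζ ψ hk hζ hS hN hE l hl
          refine h1.trans ?_
          rw [hcBdef]
          refine mul_le_mul_of_nonneg_left ?_
            (mul_nonneg hMj0.le (Real.rpow_nonneg hκ0.le _))
          exact Real.rpow_le_rpow_of_nonpos (by positivity : (0:ℝ) < ρ/2) hl2
            (by linarith : (-(3*(j:ℝ)+1)/2) ≤ 0)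
        have hC : ∀ l, ‖latticePt d B l‖ < ρ/2 →
            1 ≤ cC * ‖latticePt d B (n - l)‖ ^ (3*m) := by
          intro l hl
          set rc := ‖latticePt d B (n - l)‖ with hrcdef
          have hx : ρ - ‖latticePt d B l‖ ≤ rc := by
            rw [hrcdef, latticePt_sub]
            exact le_trans (by linarith [norm_sub_norm_le (latticePt d B n) (latticePt d B l)])
              (le_refl _)
          have hrc : ρ/2 ≤ rc := by linarith
          have hrc0 : 0 < rc := by linarith
          have hbase : 1 ≤ 2 * rc / ρ := by
            rw [le_div_iff₀ hρ0]
            linarith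
          have h1 : 1 ≤ (2 * rc / ρ) ^ (3*(m:ℝ)) := Real.one_le_rpow hbase (by positivity)
          have h2 : (2 * rc / ρ) ^ (3*(m:ℝ)) = cC * rc ^ (3*m) := by
            rw [show 2 * rc / ρ = (2/ρ) * rc by ring,
              Real.mul_rpow (by positivity) hrc0.le, hcCdef]
            congr 1
            rw [show (3*(m:ℝ)) = ((3*m : ℕ):ℝ) by push_cast; ring, Real.rpow_natCast]
          rwa [h2] at h1
        have hT := T_split hW hψ1 n thr (ρ/2) cA cB cC (j + d*m) (3*m) hcA0 hcB0 hcC0 hA hB hC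
        have hcomb := final_combine d m j hd hjm hκ0 hκ1.le hρ1.le hκd hWAnn hW0nn hWCnn hMj0.le
          (WA := WA) (W0v := W0) (WC := WC) (Mj := Mj)
        have hstep : ‖ψ n‖ ≤ 3/(κ*ρ^2) * (cA * WA + cB * W0 + cC * WC) := by
          have h3 : ‖ψ n‖ * (κ * ρ^2 / 3) ≤ cA * WA + cB * W0 + cC * WC := le_trans hpb hT
          have h4 : ‖ψ n‖ ≤ (cA * WA + cB * W0 + cC * WC) / (κ * ρ^2 / 3) :=
            (le_div_iff₀ (by positivity : (0:ℝ) < κ * ρ^2 / 3)).mpr h3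
          refine h4.trans_eq ?_
          field_simp
        rw [hcast]
        calc ‖ψ n‖ ≤ 3/(κ*ρ^2) * (cA * WA + cB * W0 + cC * WC) := hstep
          _ ≤ (3*((1+(m:ℝ)) ^ ((j:ℝ)+(d:ℝ)*(m:ℝ)) * WA + 2 ^ (3*(j:ℝ)+1) * W0 * Mj
              + 2 ^ (3*(m:ℝ)) * WC) + 1)
              * (κ ^ (-((j:ℝ)+1)) * ρ ^ ((-(3*((j:ℝ)+1)+1))/2)) := hcomb
          _ = (3*((1+(m:ℝ)) ^ ((j:ℝ)+(d:ℝ)*(m:ℝ)) * WA + 2 ^ (3*(j:ℝ)+1) * W0 * Mj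
              + 2 ^ (3*(m:ℝ)) * WC) + 1)
              * κ ^ (-((j:ℝ)+1)) * ρ ^ ((-(3*((j:ℝ)+1)+1))/2) := by ring
  obtain ⟨M, hM0, hMp⟩ := main m hm le_rfl
  refine ⟨M + 1, by linarith, ?_⟩
  intro κ hκ k ζ ψ hk hζ hS hN hE n hn
  have h1 := hMp κ hκ k ζ ψ hk hζ hS hN hE n hn
  have hκ0 := hκ.1
  obtain ⟨hζ0, hsqκ, hgt1, hQs⟩ := sqrtζ_facts hd hκ hQ hm hζ
  have hr0 : 0 < Real.sqrt ζ := Real.sqrt_pos.mpr hζ0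
  have hρ0 : (0:ℝ) < ‖latticePt d B n‖ := by
    have hmκ : (0:ℝ) < 1 + (m:ℝ)*κ := by positivity
    nlinarith [mul_pos hmκ hr0]
  have hpos : (0:ℝ) < κ ^ (-(m:ℝ)) * ‖latticePt d B n‖ ^ (-(3*(m:ℝ)+1)/2) :=
    mul_pos (Real.rpow_pos_of_pos hκ0 _) (Real.rpow_pos_of_pos hρ0 _)
  calc ‖ψ n‖ ≤ M * κ ^ (-(m:ℝ)) * ‖latticePt d B n‖ ^ (-(3*(m:ℝ)+1)/2) := h1
    _ < (M+1) * κ ^ (-(m:ℝ)) * ‖latticePt d B n‖ ^ (-(3*(m:ℝ)+1)/2) := by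
        rw [mul_assoc, mul_assoc]
        exact mul_lt_mul_of_pos_right (by linarith) hpos
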